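/- Identifiability of probability of sufficiency in a confounded CBN: in the CBN with binary U, X, Y where U is a parent of both X and Y and X is a parent of Y, any i-compatible causal model satisfies Pr(X=0 ∧ Y=0 ∧ [X←1](Y=1)) = a·b·f1·(1−f2) + (1−a)·c·f3·(1−f4), where a = P(U=0), b = P(X=0|U=0), c = P(X=0|U=1), f1 = P(Y=0|U=0,X=0), f2 = P(Y=0|U=0,X=1), f3 = P(Y=0|U=1,X=0), f4 = P(Y=0|U=1,X=1). -/

import Mathlib

/-- A functional causal model: `F X e s` gives the value of the endogenous
variable `X` given the context `e` (values of the exogenous variables) and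
the values `s` of the other endogenous variables. -/
structure CM (E V α : Type) where
  F : V → E → (V → α) → α

/-- `s` is a solution of all the structural equations of `M` in context `e`. -/
def Solves {E V α : Type} (M : CM E V α) (e : E) (s : V → α) : Prop :=
  ∀ X, s X = M.F X e s

/-- `M` is recursive (acyclic): there is a strict total order `r` on the
endogenous variables such that if `r X Y` then the equation for `X`
does not depend on the value of `Y`. -/
def Recursive {E V α : Type} (M : CM E V α) : Prop :=
  ∃ r : V → V → Prop, IsStrictTotalOrder V r ∧
    ∀ X Y, r X Y → ∀ e s s', (∀ Z, Z ≠ Y → s Z = s' Z) → M.F X e s = M.F X e s'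

/-- Intervention: replace the equation of every variable `X` with `I X = some x`
by the constant equation `X = x`. -/
def intervene {E V α : Type} (M : CM E V α) (I : V → Option α) : CM E V α :=
  ⟨fun X e s => (I X).getD (M.F X e s)⟩

/-- Causal formulas: primitive events `X = x`, Boolean combinations, and
intervention formulas `[I]φ`. -/
inductive Formula (V α : Type) where
  | eq  : V → α → Formula V α
  | neg : Formula V α → Formula V α
  | and : Formula V α → Formula V α → Formula V α
  | or  : Formula V α → Formula V α → Formula V α
  | int : (V → Option α) → Formula V α → Formula V α

/-- Satisfaction of a formula in a causal setting `(M, e)`: primitive events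
hold in the (unique, for recursive models) solution, and `[I]φ` holds iff
`φ` holds in the intervened model. -/
def Sat {E V α : Type} : CM E V α → E → Formula V α → Prop
  | M, e, .eq X x => ∀ s, Solves M e s → s X = x
  | M, e, .neg φ => ¬ Sat M e φ
  | M, e, .and φ ψ => Sat M e φ ∧ Sat M e ψ
  | M, e, .or φ ψ => Sat M e φ ∨ Sat M e ψ
  | M, e, .int I φ => Sat (intervene M I) e φ

/-- The single intervention `Y ← y`. -/
def single {V α : Type} [DecidableEq V] (Y : V) (y : α) : V → Option α :=
  fun Z => if Z = Y then some y else none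

/-- The probability of a set of contexts under the distribution `p`. -/
noncomputable def PrOf {E : Type} [Fintype E] (p : E → ℝ) (S : Set E) : ℝ :=
  ∑ e, S.indicator p e

/-- The probability of a formula: the probability of the set of contexts in
which it holds. -/
noncomputable def prF {E V α : Type} [Fintype E] (p : E → ℝ) (M : CM E V α)
    (φ : Formula V α) : ℝ :=
  PrOf p {e | Sat M e φ}

/-- Mutual independence of a family of families of events: for every finite
collection of indices and every choice of one event per index, the probability
of the intersection is the product of the probabilities. -/
def MutIndep {E : Type} [Fintype E] {ι : Type} {κ : ι → Type} (p : E → ℝ)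
    (ev : (i : ι) → κ i → Set E) : Prop :=
  ∀ (s : Finset ι) (f : (i : ι) → κ i),
    PrOf p (⋂ i ∈ s, ev i (f i)) = ∏ i ∈ s, PrOf p (ev i (f i))

/-- The three variables of the CBN: `vU` (the root), `vX`, `vY`. -/
inductive V3 : Type where
  | vU | vX | vY
deriving DecidableEq

instance : Fintype V3 where
  elems := {V3.vU, V3.vX, V3.vY}
  complete := by intro x; cases x <;> simp

open V3

/-- The joint intervention `U ← u, X ← x`. -/
def dbl (u x : Bool) : V3 → Option Bool :=
  fun Z => if Z = vU then some u else if Z = vX then some x else none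

/-- The conditional events of the confounded CBN (`U → X`, `U → Y`, `X → Y`):
the value of `U`; the value of `X` given each setting of `U`; and the value of
`Y` given each of the four settings of `(U, X)`. -/
def ev16 {E : Type} (M : CM E V3 Bool) : Fin 7 → Bool → Set E
  | ⟨0, _⟩ => fun v => {e | Sat M e (.eq vU v)}
  | ⟨1, _⟩ => fun v => {e | Sat M e (.int (single vU false) (.eq vX v))}
  | ⟨2, _⟩ => fun v => {e | Sat M e (.int (single vU true) (.eq vX v))}
  | ⟨3, _⟩ => fun v => {e | Sat M e (.int (dbl false false) (.eq vY v))}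
  | ⟨4, _⟩ => fun v => {e | Sat M e (.int (dbl false true) (.eq vY v))}
  | ⟨5, _⟩ => fun v => {e | Sat M e (.int (dbl true false) (.eq vY v))}
  | ⟨6, _⟩ => fun v => {e | Sat M e (.int (dbl true true) (.eq vY v))}

/-- Dependence structure of the confounded CBN. -/
def Nice {E : Type} (M : CM E V3 Bool) : Prop :=
  (∀ e s s', M.F vU e s = M.F vU e s') ∧
  (∀ e s s', s vU = s' vU → M.F vX e s = M.F vX e s') ∧
  (∀ e s s', s vU = s' vU → s vX = s' vX → M.F vY e s = M.F vY e s')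

/-- The canonical solution. -/
def mkSol {E : Type} (M : CM E V3 Bool) (e : E) : V3 → Bool :=
  fun Z =>
    let u := M.F vU e (fun _ => false)
    let x := M.F vX e (fun _ => u)
    match Z with
    | vU => u
    | vX => x
    | vY => M.F vY e (fun W => if W = vX then x else u)

lemma mkSol_solves {E : Type} {M : CM E V3 Bool} (hN : Nice M) (e : E) :
    Solves M e (mkSol M e) := by
  obtain ⟨hU, hX, hY⟩ := hN
  intro Z
  cases Z with
  | vU => exact hU e _ _
  | vX => exact hX e _ _ rfl
  | vY => exact hY e _ _ rfl rfl

lemma solves_unique {E : Type} {M : CM E V3 Bool} (hN : Nice M) (e : E)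
    (s : V3 → Bool) (hs : Solves M e s) : s = mkSol M e := by
  obtain ⟨hU, hX, hY⟩ := hN
  have h1 : s vU = mkSol M e vU := by rw [hs vU]; exact hU e _ _
  have h2 : s vX = mkSol M e vX := by rw [hs vX]; exact hX e _ _ h1
  funext Z
  cases Z with
  | vU => exact h1
  | vX => exact h2
  | vY =>
    rw [hs vY]
    refine hY e _ _ h1 h2

lemma sat_eq_iff {E : Type} {M : CM E V3 Bool} (hN : Nice M) (e : E)
    (Z : V3) (v : Bool) : Sat M e (.eq Z v) ↔ mkSol M e Z = v := by
  constructor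
  · intro h; exact h _ (mkSol_solves hN e)
  · intro h s hs; rw [solves_unique hN e s hs]; exact h

lemma nice_intervene {E : Type} {M : CM E V3 Bool} (hN : Nice M)
    (I : V3 → Option Bool) : Nice (intervene M I) := by
  obtain ⟨hU, hX, hY⟩ := hN
  refine ⟨fun e s s' => ?_, fun e s s' h => ?_, fun e s s' h1 h2 => ?_⟩
  · simp only [intervene]; rw [hU e s s']
  · simp only [intervene]; rw [hX e s s' h]
  · simp only [intervene]; rw [hY e s s' h1 h2]

section
variable {E : Type} (M : CM E V3 Bool) (e : E)

lemma mkSol_vU : mkSol M e vU = M.F vU e (fun _ => false) := rfl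

lemma mkSol_vX :
    mkSol M e vX = M.F vX e (fun _ => M.F vU e (fun _ => false)) := rfl

lemma mkSol_vY :
    mkSol M e vY = M.F vY e (fun W => if W = vX then
      M.F vX e (fun _ => M.F vU e (fun _ => false))
      else M.F vU e (fun _ => false)) := rfl

lemma mkSol_int_singleU (u : Bool) :
    mkSol (intervene M (single vU u)) e vX = M.F vX e (fun _ => u) := by
  simp [mkSol, intervene, single]

lemma mkSol_int_dbl (u x : Bool) :
    mkSol (intervene M (dbl u x)) e vY
      = M.F vY e (fun W => if W = vX then x else u) := by
  simp [mkSol, intervene, dbl]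

lemma mkSol_int_singleX (x : Bool) :
    mkSol (intervene M (single vX x)) e vY
      = M.F vY e (fun W => if W = vX then x else M.F vU e (fun _ => false)) := by
  simp [mkSol, intervene, single]

end

def GU {E : Type} (M : CM E V3 Bool) (e : E) : Bool := M.F vU e (fun _ => false)
def GX {E : Type} (M : CM E V3 Bool) (u : Bool) (e : E) : Bool :=
  M.F vX e (fun _ => u)
def GY {E : Type} (M : CM E V3 Bool) (u x : Bool) (e : E) : Bool :=
  M.F vY e (fun W => if W = vX then x else u)

section
variable {E : Type} {M : CM E V3 Bool}

lemma ev16_0 (hN : Nice M) (v : Bool) : ev16 M 0 v = {e | GU M e = v} := by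
  ext e; exact sat_eq_iff hN e vU v

lemma ev16_1 (hN : Nice M) (v : Bool) : ev16 M 1 v = {e | GX M false e = v} := by
  ext e
  show Sat (intervene M (single vU false)) e (.eq vX v) ↔ _
  rw [sat_eq_iff (nice_intervene hN _) e, mkSol_int_singleU]
  exact Iff.rfl

lemma ev16_2 (hN : Nice M) (v : Bool) : ev16 M 2 v = {e | GX M true e = v} := by
  ext e
  show Sat (intervene M (single vU true)) e (.eq vX v) ↔ _
  rw [sat_eq_iff (nice_intervene hN _) e, mkSol_int_singleU]
  exact Iff.rfl

lemma ev16_dbl (hN : Nice M) (u x v : Bool) :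
    {e | Sat M e (.int (dbl u x) (.eq vY v))} = {e | GY M u x e = v} := by
  ext e
  show Sat (intervene M (dbl u x)) e (.eq vY v) ↔ _
  rw [sat_eq_iff (nice_intervene hN _) e, mkSol_int_dbl]
  exact Iff.rfl

lemma ev16_3 (hN : Nice M) (v : Bool) : ev16 M 3 v = {e | GY M false false e = v} :=
  ev16_dbl hN false false v

lemma ev16_4 (hN : Nice M) (v : Bool) : ev16 M 4 v = {e | GY M false true e = v} :=
  ev16_dbl hN false true v

lemma ev16_5 (hN : Nice M) (v : Bool) : ev16 M 5 v = {e | GY M true false e = v} :=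
  ev16_dbl hN true false v

lemma ev16_6 (hN : Nice M) (v : Bool) : ev16 M 6 v = {e | GY M true true e = v} :=
  ev16_dbl hN true true v

lemma target_eq (hN : Nice M) :
    {e | Sat M e (.and (.eq vX false) (.and (.eq vY false)
        (.int (single vX true) (.eq vY true))))}
      = {e | GX M (GU M e) e = false ∧ GY M (GU M e) (GX M (GU M e) e) e = false
          ∧ GY M (GU M e) true e = true} := by
  ext e
  show (Sat M e (.eq vX false) ∧ Sat M e (.eq vY false) ∧
      Sat (intervene M (single vX true)) e (.eq vY true)) ↔ _
  rw [sat_eq_iff hN, sat_eq_iff hN, sat_eq_iff (nice_intervene hN _),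
    mkSol_int_singleX]
  exact Iff.rfl

end

/-- identifiability of the probability of sufficiency in the
confounded CBN with binary `U, X, Y`, where `U` is a parent of both `X` and
`Y` and `X` is a parent of `Y`: any i-compatible causal model satisfies
`Pr(X=0 ∧ Y=0 ∧ [X←1](Y=1)) = a·b·f1·(1−f2) + (1−a)·c·f3·(1−f4)`, where
`a = P(U=0)`, `b = P(X=0|U=0)`, `c = P(X=0|U=1)`, `f1 = P(Y=0|U=0,X=0)`,
`f2 = P(Y=0|U=0,X=1)`, `f3 = P(Y=0|U=1,X=0)`, `f4 = P(Y=0|U=1,X=1)`. -/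
theorem stmt16 {E : Type} [Fintype E] (M : CM E V3 Bool) (hrec : Recursive M)
    (hFU : ∀ e s s', M.F vU e s = M.F vU e s')
    (hFX : ∀ e s s', s vU = s' vU → M.F vX e s = M.F vX e s')
    (hFY : ∀ e s s', s vU = s' vU → s vX = s' vX → M.F vY e s = M.F vY e s')
    (p : E → ℝ) (hp0 : ∀ e, 0 ≤ p e) (hp1 : ∑ e, p e = 1)
    (a b c f1 f2 f3 f4 : ℝ)
    (ha : PrOf p (ev16 M 0 false) = a) (hb : PrOf p (ev16 M 1 false) = b)
    (hc : PrOf p (ev16 M 2 false) = c)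
    (hf1 : PrOf p (ev16 M 3 false) = f1) (hf2 : PrOf p (ev16 M 4 false) = f2)
    (hf3 : PrOf p (ev16 M 5 false) = f3) (hf4 : PrOf p (ev16 M 6 false) = f4)
    (hind : MutIndep p (ev16 M)) :
    PrOf p {e | Sat M e (.and (.eq vX false) (.and (.eq vY false)
        (.int (single vX true) (.eq vY true))))} =
      a * b * f1 * (1 - f2) + (1 - a) * c * f3 * (1 - f4) := by
  have hN : Nice M := ⟨hFU, hFX, hFY⟩
  -- basic probability facts
  have compl_pr : ∀ S : Set E, PrOf p Sᶜ = 1 - PrOf p S := by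
    intro S
    have h : PrOf p S + PrOf p Sᶜ = 1 := by
      rw [PrOf, PrOf, ← Finset.sum_add_distrib, ← hp1]
      refine Finset.sum_congr rfl fun e _ => ?_
      by_cases hS : e ∈ S <;> simp [Set.indicator, hS]
    linarith
  have add_pr : ∀ A B : Set E, A ∩ B = ∅ →
      PrOf p (A ∪ B) = PrOf p A + PrOf p B := by
    intro A B hAB
    rw [PrOf, PrOf, PrOf, ← Finset.sum_add_distrib]
    refine Finset.sum_congr rfl fun e _ => ?_
    have hne : e ∈ A → e ∈ B → False := fun h1 h2 =>
      Set.eq_empty_iff_forall_notMem.mp hAB e ⟨h1, h2⟩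
    by_cases hA : e ∈ A
    · have hB : e ∉ B := fun h => hne hA h
      simp [Set.indicator, hA, hB]
    · by_cases hB : e ∈ B <;> simp [Set.indicator, hA, hB]
  -- complements of the conditional events
  have h0t : PrOf p (ev16 M 0 true) = 1 - a := by
    have hc' : ev16 M 0 true = (ev16 M 0 false)ᶜ := by
      rw [ev16_0 hN, ev16_0 hN]; ext e; cases GU M e <;> simp
    rw [hc', compl_pr, ha]
  have h4t : PrOf p (ev16 M 4 true) = 1 - f2 := by
    have hc' : ev16 M 4 true = (ev16 M 4 false)ᶜ := by
      rw [ev16_4 hN, ev16_4 hN]; ext e; cases GY M false true e <;> simp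
    rw [hc', compl_pr, hf2]
  have h6t : PrOf p (ev16 M 6 true) = 1 - f4 := by
    have hc' : ev16 M 6 true = (ev16 M 6 false)ᶜ := by
      rw [ev16_6 hN, ev16_6 hN]; ext e; cases GY M true true e <;> simp
    rw [hc', compl_pr, hf4]
  -- independence applied to the two branches
  have hA0 := hind {0, 1, 3, 4} ![false, false, false, false, true, false, false]
  have hA1 := hind {0, 2, 5, 6} ![true, false, false, false, false, false, true]
  rw [show ({0, 1, 3, 4} : Finset (Fin 7)) = insert 0 (insert 1 (insert 3 {4}))
      from rfl] at hA0
  rw [show ({0, 2, 5, 6} : Finset (Fin 7)) = insert 0 (insert 2 (insert 5 {6}))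
      from rfl] at hA1
  rw [Finset.set_biInter_insert, Finset.set_biInter_insert,
    Finset.set_biInter_insert, Finset.set_biInter_singleton,
    Finset.prod_insert (by decide), Finset.prod_insert (by decide),
    Finset.prod_insert (by decide), Finset.prod_singleton] at hA0 hA1
  simp only [Matrix.cons_val_zero, Matrix.cons_val_one, Matrix.head_cons,
    show ((3 : Fin 7) : Fin 7) = 3 from rfl] at hA0 hA1
  have hv0 : (![false, false, false, false, true, false, false] : Fin 7 → Bool) 0
      = false := rfl
  have hv1 : (![false, false, false, false, true, false, false] : Fin 7 → Bool) 1
      = false := rfl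
  have hv3 : (![false, false, false, false, true, false, false] : Fin 7 → Bool) 3
      = false := rfl
  have hv4 : (![false, false, false, false, true, false, false] : Fin 7 → Bool) 4
      = true := rfl
  have hw0 : (![true, false, false, false, false, false, true] : Fin 7 → Bool) 0
      = true := rfl
  have hw2 : (![true, false, false, false, false, false, true] : Fin 7 → Bool) 2
      = false := rfl
  have hw5 : (![true, false, false, false, false, false, true] : Fin 7 → Bool) 5
      = false := rfl
  have hw6 : (![true, false, false, false, false, false, true] : Fin 7 → Bool) 6
      = true := rfl
  rw [hv3, hv4] at hA0
  rw [hw2, hw5, hw6] at hA1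
  rw [ha, hb, hf1, h4t] at hA0
  rw [h0t, hc, hf3, h6t] at hA1
  rw [ev16_0 hN, ev16_1 hN, ev16_3 hN, ev16_4 hN] at hA0
  rw [ev16_0 hN, ev16_2 hN, ev16_5 hN, ev16_6 hN] at hA1
  -- decompose the target event
  have hset : {e | GX M (GU M e) e = false
        ∧ GY M (GU M e) (GX M (GU M e) e) e = false ∧ GY M (GU M e) true e = true}
      = ({e | GU M e = false} ∩ ({e | GX M false e = false} ∩
          ({e | GY M false false e = false} ∩ {e | GY M false true e = true})))
        ∪ ({e | GU M e = true} ∩ ({e | GX M true e = false} ∩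
          ({e | GY M true false e = false} ∩ {e | GY M true true e = true}))) := by
    ext e
    simp only [Set.mem_setOf_eq, Set.mem_union, Set.mem_inter_iff]
    constructor
    · rintro ⟨h1, h2, h3⟩
      cases hu : GU M e
      · left; rw [hu] at h1 h2 h3; rw [h1] at h2; exact ⟨rfl, h1, h2, h3⟩
      · right; rw [hu] at h1 h2 h3; rw [h1] at h2; exact ⟨rfl, h1, h2, h3⟩
    · rintro (⟨hu, h1, h2, h3⟩ | ⟨hu, h1, h2, h3⟩) <;> rw [hu] <;>
        exact ⟨h1, by rw [h1]; exact h2, h3⟩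
  have hdisj : ({e | GU M e = false} ∩ ({e | GX M false e = false} ∩
          ({e | GY M false false e = false} ∩ {e | GY M false true e = true})))
      ∩ ({e | GU M e = true} ∩ ({e | GX M true e = false} ∩
          ({e | GY M true false e = false} ∩ {e | GY M true true e = true})))
      = ∅ := by
    rw [Set.eq_empty_iff_forall_notMem]
    rintro e ⟨⟨h1, -⟩, ⟨h2, -⟩⟩
    simp only [Set.mem_setOf_eq] at h1 h2
    rw [h1] at h2; exact Bool.false_ne_true h2
  rw [target_eq hN, hset, add_pr _ _ hdisj, hA0, hA1]
  ring
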